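/- There exists a set S ⊆ ℝ² that is ample but does not have the interior cone property. Concretely, the epigraph S = {(t, y) ∈ ℝ² : y ≥ √|t|} of the function t ↦ √|t| is ample, yet S fails the interior cone property at the origin. -/

import Mathlib

open Filter Topology

def Ample {n : ℕ} (S : Set (EuclideanSpace ℝ (Fin n))) : Prop :=
  S ⊆ closure (interior S)

/-- The point `(0, 1)` in `ℝ²`. -/
noncomputable def e2 : EuclideanSpace ℝ (Fin 2) := WithLp.toLp 2 ![0, 1]

/-- The point `(sin δ, cos δ)` in `ℝ²`. -/
noncomputable def c2 (δ : ℝ) : EuclideanSpace ℝ (Fin 2) := WithLp.toLp 2 ![Real.sin δ, Real.cos δ]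

lemma e2_zero : e2 0 = 0 := rfl
lemma e2_one : e2 1 = 1 := rfl
lemma c2_zero (δ : ℝ) : c2 δ 0 = Real.sin δ := rfl
lemma c2_one (δ : ℝ) : c2 δ 1 = Real.cos δ := rfl

lemma curve_cont : Continuous c2 := by
  apply Continuous.comp (PiLp.continuous_toLp 2 fun _ : Fin 2 => ℝ)
  refine continuous_pi fun i => ?_
  refine Fin.cases ?_ (fun j => ?_) i
  · exact Real.continuous_sin
  · simpa using Real.continuous_cos

lemma c2_at_zero : c2 0 = e2 := by
  unfold c2 e2
  simp

lemma c2_sphere (δ : ℝ) :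
    c2 δ ∈ Metric.sphere (0 : EuclideanSpace ℝ (Fin 2)) 1 := by
  refine mem_sphere_zero_iff_norm.mpr ?_
  rw [EuclideanSpace.norm_eq]
  simp only [Fin.sum_univ_two, Real.norm_eq_abs]
  rw [show |c2 δ 0| ^ 2 + |c2 δ 1| ^ 2 = Real.sin δ ^ 2 + Real.cos δ ^ 2 by
    simp [c2, sq_abs]]
  rw [Real.sin_sq_add_cos_sq, Real.sqrt_one]

/-- The set `S = {(t, y) : y ≥ √|t|}` (the epigraph of `t ↦ √|t|` in ℝ²) is ample,
yet the interior cone property fails for `S` at the origin. -/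
theorem ample_not_ICP_epigraph_sqrt :
    Ample {x : EuclideanSpace ℝ (Fin 2) | Real.sqrt |x 0| ≤ x 1} ∧
    (0 : EuclideanSpace ℝ (Fin 2)) ∈
      frontier {x : EuclideanSpace ℝ (Fin 2) | Real.sqrt |x 0| ≤ x 1} ∧
    ¬ (∃ U : Set (EuclideanSpace ℝ (Fin 2)),
        U.Nonempty ∧ U ⊆ Metric.sphere 0 1 ∧
        (∃ V, IsOpen V ∧ U = V ∩ Metric.sphere 0 1) ∧
        ∃ O : Set (EuclideanSpace ℝ (Fin 2)), IsOpen O ∧ (0 : EuclideanSpace ℝ (Fin 2)) ∈ O ∧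
          {y | ∃ l : ℝ, 0 < l ∧ ∃ u ∈ U, y = (0 : EuclideanSpace ℝ (Fin 2)) + l • u} ∩
              {y | y - 0 ∈ O} ⊆
            {x : EuclideanSpace ℝ (Fin 2) | Real.sqrt |x 0| ≤ x 1}) := by
  set S : Set (EuclideanSpace ℝ (Fin 2)) := {x | Real.sqrt |x 0| ≤ x 1} with hS
  refine ⟨?_, ?_, ?_⟩
  · -- Ample
    intro x hx
    have hcont0 : Continuous fun y : EuclideanSpace ℝ (Fin 2) => Real.sqrt |y 0| :=
      Real.continuous_sqrt.comp (continuous_abs.comp (EuclideanSpace.proj (0 : Fin 2)).continuous)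
    have hT : IsOpen {y : EuclideanSpace ℝ (Fin 2) | Real.sqrt |y 0| < y 1} :=
      isOpen_lt hcont0 (EuclideanSpace.proj (1 : Fin 2)).continuous
    have hTsub : {y : EuclideanSpace ℝ (Fin 2) | Real.sqrt |y 0| < y 1} ⊆ interior S :=
      interior_maximal (fun y hy => show Real.sqrt |y 0| ≤ y 1 from le_of_lt hy) hT
    refine closure_mono hTsub ?_
    have hc : Continuous fun ε : ℝ => x + ε • e2 :=
      continuous_const.add (continuous_id.smul continuous_const)
    have key : Tendsto (fun ε : ℝ => x + ε • e2) (𝓝[>] (0:ℝ)) (𝓝 x) := by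
      have h' : Tendsto (fun ε : ℝ => x + ε • e2) (𝓝[>] (0:ℝ)) (𝓝 (x + (0:ℝ) • e2)) :=
        (hc.tendsto 0).mono_left nhdsWithin_le_nhds
      simpa using h'
    refine mem_closure_of_tendsto key ?_
    filter_upwards [self_mem_nhdsWithin] with ε hε
    have hε' : (0:ℝ) < ε := hε
    show Real.sqrt |(x + ε • e2) 0| < (x + ε • e2) 1
    have h0 : (x + ε • e2) 0 = x 0 := by
      simp [PiLp.add_apply, PiLp.smul_apply, e2_zero]
    have h1 : (x + ε • e2) 1 = x 1 + ε := by
      simp [PiLp.add_apply, PiLp.smul_apply, e2_one]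
    rw [h0, h1]
    have hx' : Real.sqrt |x 0| ≤ x 1 := hx
    linarith
  · -- frontier
    show (0 : EuclideanSpace ℝ (Fin 2)) ∈ closure S \ interior S
    constructor
    · refine subset_closure ?_
      show Real.sqrt |(0 : EuclideanSpace ℝ (Fin 2)) 0| ≤ (0 : EuclideanSpace ℝ (Fin 2)) 1
      simp
    · intro h
      have hnh : S ∈ 𝓝 (0 : EuclideanSpace ℝ (Fin 2)) := mem_interior_iff_mem_nhds.mp h
      have hc : Continuous fun ε : ℝ => (-ε) • e2 :=
        (continuous_neg.comp continuous_id).smul continuous_const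
      have t : Tendsto (fun ε : ℝ => (-ε) • e2) (𝓝[>] (0:ℝ)) (𝓝 0) := by
        have h' : Tendsto (fun ε : ℝ => (-ε) • e2) (𝓝[>] (0:ℝ)) (𝓝 ((-(0:ℝ)) • e2)) :=
          (hc.tendsto 0).mono_left nhdsWithin_le_nhds
        simpa using h'
      obtain ⟨ε, hεS, hε⟩ := ((t.eventually hnh).and self_mem_nhdsWithin).exists
      have hε' : (0:ℝ) < ε := hε
      have hεS' : Real.sqrt |((-ε) • e2) 0| ≤ ((-ε) • e2) 1 := hεS
      have h0 : ((-ε) • e2) 0 = 0 := by simp [PiLp.smul_apply, e2_zero]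
      have h1 : ((-ε) • e2) 1 = -ε := by simp [PiLp.smul_apply, e2_one]
      rw [h0, h1] at hεS'
      simp at hεS'
      linarith
  · -- no interior cone
    rintro ⟨U, ⟨u₀, hu₀⟩, hUs, ⟨V, hV, hUV⟩, O, hO, h0O, hsub⟩
    have claim : ∀ u ∈ U, u 0 = 0 ∧ u 1 = 1 := by
      intro u hu
      have tl : Tendsto (fun l : ℝ => l • u) (𝓝[>] (0:ℝ)) (𝓝 0) := by
        have hc : Continuous fun l : ℝ => l • u := continuous_id.smul continuous_const
        have h' : Tendsto (fun l : ℝ => l • u) (𝓝[>] (0:ℝ)) (𝓝 ((0:ℝ) • u)) :=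
          (hc.tendsto 0).mono_left nhdsWithin_le_nhds
        simpa using h'
      have hmem : ∀ᶠ l in 𝓝[>] (0:ℝ), Real.sqrt |l * u 0| ≤ l * u 1 := by
        filter_upwards [tl.eventually (hO.mem_nhds h0O), self_mem_nhdsWithin] with l hlO hl
        have hmem' : l • u ∈ S :=
          hsub ⟨⟨l, hl, u, hu, by simp⟩, show l • u - 0 ∈ O by rw [sub_zero]; exact hlO⟩
        have : Real.sqrt |(l • u) 0| ≤ (l • u) 1 := hmem'
        simpa [PiLp.smul_apply, smul_eq_mul] using this
      have hnorm : ‖u‖ = 1 := by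
        have := hUs hu
        simpa [mem_sphere_iff_norm] using this
      have h2 : |u 0| ^ 2 + |u 1| ^ 2 = 1 := by
        rw [EuclideanSpace.norm_eq] at hnorm
        simp only [Fin.sum_univ_two, Real.norm_eq_abs] at hnorm
        have hnn : (0:ℝ) ≤ |u 0| ^ 2 + |u 1| ^ 2 := by positivity
        nlinarith [Real.sq_sqrt hnn]
      have habs1 : |u 1| ≤ 1 := by nlinarith [abs_nonneg (u 0), abs_nonneg (u 1)]
      have hu0 : u 0 = 0 := by
        by_contra h
        have habs : 0 < |u 0| := abs_pos.mpr h
        have hsmall : ∀ᶠ l in 𝓝[>] (0:ℝ), l < |u 0| :=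
          (gt_mem_nhds habs).filter_mono nhdsWithin_le_nhds
        obtain ⟨l, ⟨hl1, hl2⟩, hl3⟩ := ((hmem.and hsmall).and self_mem_nhdsWithin).exists
        have hl3' : (0:ℝ) < l := hl3
        rw [abs_mul, abs_of_pos hl3'] at hl1
        have k1 : l < Real.sqrt (l * |u 0|) := by
          calc l = Real.sqrt (l * l) := (Real.sqrt_mul_self hl3'.le).symm
            _ < Real.sqrt (l * |u 0|) := by
                apply Real.sqrt_lt_sqrt (by nlinarith)
                nlinarith
        have k2 : l * u 1 ≤ l := by nlinarith [(abs_le.mp habs1).2]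
        linarith
      have hpos : 0 ≤ u 1 := by
        obtain ⟨l, hl1, hl3⟩ := (hmem.and self_mem_nhdsWithin).exists
        have hl3' : (0:ℝ) < l := hl3
        have : (0:ℝ) ≤ l * u 1 := le_trans (Real.sqrt_nonneg _) hl1
        nlinarith
      rw [hu0] at h2
      simp at h2
      rcases h2 with h | h
      · exact ⟨hu0, h⟩
      · exfalso; rw [h] at hpos; linarith
    have hu₀V : u₀ ∈ V := by
      rw [hUV] at hu₀; exact hu₀.1
    have hVnhds : V ∈ 𝓝 u₀ := hV.mem_nhds hu₀V
    have hu₀eq : u₀ = e2 := by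
      obtain ⟨ha, hb⟩ := claim u₀ hu₀
      refine PiLp.ext fun i => ?_
      refine Fin.cases ?_ (fun j => ?_) i
      · rw [ha]; rfl
      · have hj : j = 0 := Subsingleton.elim _ _
        subst hj
        rw [show ((0:Fin 1).succ) = (1 : Fin 2) from rfl, hb]; rfl
    have hc : Tendsto c2 (𝓝[>] (0:ℝ)) (𝓝 u₀) := by
      have h' : Tendsto c2 (𝓝[>] (0:ℝ)) (𝓝 (c2 0)) :=
        (curve_cont.tendsto 0).mono_left nhdsWithin_le_nhds
      rw [hu₀eq, ← c2_at_zero]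
      exact h'
    have hev : ∀ᶠ δ in 𝓝[>] (0:ℝ), c2 δ ∈ V := hc.eventually hVnhds
    have hsin : ∀ᶠ δ in 𝓝[>] (0:ℝ), 0 < Real.sin δ := by
      have hmem : Set.Ioo (0:ℝ) Real.pi ∈ 𝓝[>] (0:ℝ) :=
        Ioo_mem_nhdsGT_of_mem ⟨le_refl _, Real.pi_pos⟩
      filter_upwards [hmem] with δ hδ
      exact Real.sin_pos_of_pos_of_lt_pi hδ.1 hδ.2
    obtain ⟨δ, hδV, hδsin⟩ := (hev.and hsin).exists
    have hmemU : c2 δ ∈ U := by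
      rw [hUV]; exact ⟨hδV, c2_sphere δ⟩
    have hzero := (claim _ hmemU).1
    rw [c2_zero] at hzero
    exact absurd hzero (ne_of_gt hδsin)
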